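/- (Fano's inequality) Let Y and Ŷ be discrete random variables taking values in a finite set of size C, and let P_E = P(Ŷ ≠ Y). Then H(Y | Ŷ) ≤ H_b(P_E) + P_E · log(C − 1), where H_b(p) = −p log p − (1−p) log(1−p) is the binary entropy function. -/

import Mathlib

open Finset

noncomputable section

variable {Ω : Type} [Fintype Ω]

/-- `p` is a probability mass function on the finite sample space `Ω`. -/
def IsPMF (p : Ω → ℝ) : Prop := (∀ ω, 0 ≤ p ω) ∧ ∑ ω, p ω = 1

/-- Probability of an event under `p`. -/
def probEvent (p : Ω → ℝ) (A : Ω → Prop) [DecidablePred A] : ℝ :=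
  ∑ ω, if A ω then p ω else 0

/-- Distribution (pmf) of a discrete random variable `Y`. -/
def dist (p : Ω → ℝ) {S : Type} [Fintype S] [DecidableEq S] (Y : Ω → S) (y : S) : ℝ :=
  ∑ ω, if Y ω = y then p ω else 0

/-- Shannon entropy of `Y` (natural logarithm; `Real.log 0 = 0` gives `0 log 0 = 0`). -/
def entropy (p : Ω → ℝ) {S : Type} [Fintype S] [DecidableEq S] (Y : Ω → S) : ℝ :=
  -∑ y, dist p Y y * Real.log (dist p Y y)

/-- Conditional entropy `H(Y | X) = H(Y, X) - H(X)`. -/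
def condEntropy (p : Ω → ℝ) {S T : Type} [Fintype S] [DecidableEq S] [Fintype T] [DecidableEq T]
    (Y : Ω → S) (X : Ω → T) : ℝ :=
  entropy p (fun ω => (Y ω, X ω)) - entropy p X

/-- Mutual information `I(Y ; X) = H(Y) - H(Y | X)`. -/
def mutualInfo (p : Ω → ℝ) {S T : Type} [Fintype S] [DecidableEq S] [Fintype T] [DecidableEq T]
    (Y : Ω → S) (X : Ω → T) : ℝ :=
  entropy p Y - condEntropy p Y X

/-- Conditional mutual information `I(Y ; X | Z) = H(Y | Z) - H(Y | X, Z)`. -/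
def condMutualInfo (p : Ω → ℝ) {S T U : Type} [Fintype S] [DecidableEq S] [Fintype T]
    [DecidableEq T] [Fintype U] [DecidableEq U] (Y : Ω → S) (X : Ω → T) (Z : Ω → U) : ℝ :=
  condEntropy p Y Z - condEntropy p Y (fun ω => (X ω, Z ω))

/-- `Y` and `Z` are conditionally independent given `X` (multiplied-out form, valid also when
`P(X = x) = 0`). -/
def CondIndepGiven (p : Ω → ℝ) {S T U : Type} [Fintype S] [DecidableEq S] [Fintype U]
    [DecidableEq U] [Fintype T] [DecidableEq T] (Y : Ω → S) (Z : Ω → U) (X : Ω → T) : Prop :=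
  ∀ y z x, dist p (fun ω => (Y ω, Z ω, X ω)) (y, z, x) * dist p X x =
    dist p (fun ω => (Y ω, X ω)) (y, x) * dist p (fun ω => (Z ω, X ω)) (z, x)

/-- `Y` is uniformly distributed on its (finite) value set. -/
def IsUniform (p : Ω → ℝ) {S : Type} [Fintype S] [DecidableEq S] (Y : Ω → S) : Prop :=
  ∀ y, dist p Y y = 1 / (Fintype.card S : ℝ)

/-- Binary entropy function `H_b(q) = -q log q - (1-q) log (1-q)`. -/
def binEntropy (q : ℝ) : ℝ := -(q * Real.log q) - (1 - q) * Real.log (1 - q)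

/-- Fano's inequality. -/
theorem fano_inequality {S : Type} [Fintype S] [DecidableEq S]
    (p : Ω → ℝ) (hp : IsPMF p) (C : ℕ) (hcard : Fintype.card S = C)
    (Y Yhat : Ω → S) :
    condEntropy p Y Yhat ≤ binEntropy (probEvent p (fun ω => Yhat ω ≠ Y ω)) +
      probEvent p (fun ω => Yhat ω ≠ Y ω) * Real.log ((C : ℝ) - 1) := by
  classical
  rcases Nat.eq_zero_or_pos C with hC0 | hC1
  · exfalso
    have hS : IsEmpty S := by
      rw [← Fintype.card_eq_zero_iff, hcard, hC0]
    have hΩ : IsEmpty Ω := ⟨fun ω => hS.elim (Y ω)⟩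
    have h2 := hp.2
    rw [Finset.sum_eq_zero (fun ω _ => (hΩ.elim ω))] at h2
    norm_num at h2
  set Pe := probEvent p (fun ω => Yhat ω ≠ Y ω) with hPedef
  set r : S × S → ℝ := _root_.dist p (fun ω => (Y ω, Yhat ω)) with hrdef
  set m : S → ℝ := _root_.dist p Yhat with hmdef
  have hp0 := hp.1
  have hr0 : ∀ z, 0 ≤ r z := fun z =>
    Finset.sum_nonneg fun ω _ => by split <;> simp [hp0 ω]
  have hm0 : ∀ t, 0 ≤ m t := fun t =>
    Finset.sum_nonneg fun ω _ => by split <;> simp [hp0 ω]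
  have hrsum : ∑ z, r z = 1 := by
    rw [hrdef]; unfold _root_.dist
    rw [Finset.sum_comm]
    simp [hp.2]
  have hmr : ∀ t, m t = ∑ y, r (y, t) := by
    intro t
    rw [hmdef, hrdef]; unfold _root_.dist
    rw [Finset.sum_comm]
    refine Finset.sum_congr rfl fun ω _ => ?_
    simp [Prod.ext_iff, ite_and]
  have hPesum : Pe = ∑ z : S × S, if z.1 ≠ z.2 then r z else 0 := by
    rw [hPedef, hrdef]; unfold probEvent _root_.dist
    have hpush : ∀ z : S × S, (if z.1 ≠ z.2 then ∑ ω, (if (Y ω, Yhat ω) = z then p ω else 0) else 0)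
        = ∑ ω, (if z.1 ≠ z.2 then (if (Y ω, Yhat ω) = z then p ω else 0) else 0) := by
      intro z; split <;> simp
    rw [Finset.sum_congr rfl fun z _ => hpush z, Finset.sum_comm]
    refine Finset.sum_congr rfl fun ω _ => ?_
    rw [Finset.sum_eq_single (Y ω, Yhat ω)]
    · simp [ne_comm]
    · intro z _ hz
      split
      · rw [if_neg (fun h => hz h.symm)]
      · rfl
    · intro h; exact absurd (Finset.mem_univ _) h
  -- bounds on Pe
  have hPe0 : 0 ≤ Pe :=
    Finset.sum_nonneg fun ω _ => by split <;> simp [hp0 ω]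
  have hPe1 : Pe ≤ 1 := by
    rw [hPesum, ← hrsum]
    exact Finset.sum_le_sum fun z _ => by split <;> simp [hr0 z]
  have hdiag : ∑ z : S × S, (if z.1 = z.2 then r z else 0) = 1 - Pe := by
    rw [hPesum, ← hrsum]
    rw [eq_sub_iff_add_eq, ← Finset.sum_add_distrib]
    refine Finset.sum_congr rfl fun z _ => ?_
    by_cases h : z.1 = z.2 <;> simp [h]
  set q : S × S → ℝ := fun z => if z.1 = z.2 then 1 - Pe else Pe / ((C : ℝ) - 1) with hqdef
  have hq0 : ∀ z, 0 ≤ q z := by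
    intro z
    rw [hqdef]
    dsimp only
    split
    · linarith
    · rename_i h
      have hC2 : 2 ≤ C := by
        rw [← hcard]
        exact Fintype.one_lt_card_iff.2 ⟨z.1, z.2, h⟩
      have : (1:ℝ) ≤ (C:ℝ) - 1 := by
        have : (2:ℝ) ≤ (C:ℝ) := by exact_mod_cast hC2
        linarith
      positivity
  have hqsum : ∀ t : S, ∑ y, q (y, t) ≤ 1 := by
    intro t
    rw [hqdef]
    dsimp only
    rw [← Finset.add_sum_erase _ _ (Finset.mem_univ t)]
    simp only [if_pos rfl]
    have herase : ∀ y ∈ Finset.univ.erase t,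
        (if y = t then 1 - Pe else Pe / ((C:ℝ) - 1)) = Pe / ((C:ℝ)-1) := by
      intro y hy
      rw [if_neg (Finset.ne_of_mem_erase hy)]
    rw [Finset.sum_congr rfl herase, Finset.sum_const,
      Finset.card_erase_of_mem (Finset.mem_univ t), Finset.card_univ, hcard, nsmul_eq_mul,
      if_pos trivial]
    rcases eq_or_lt_of_le (show 1 ≤ C from hC1) with h1 | h2
    · -- C = 1
      rw [← h1]
      norm_num
      linarith
    · have hC2 : 2 ≤ C := h2
      have hne : (C:ℝ) - 1 ≠ 0 := by
        have : (2:ℝ) ≤ (C:ℝ) := by exact_mod_cast hC2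
        linarith
      have : ((C - 1 : ℕ) : ℝ) = (C:ℝ) - 1 := by
        have : 1 ≤ C := hC1
        push_cast [this]
        ring
      rw [this, mul_div_cancel₀ _ hne]
      linarith
  -- positivity of pieces when r z > 0
  have hmpos : ∀ z : S × S, 0 < r z → 0 < m z.2 := by
    intro z hz
    rw [hmr]
    calc 0 < r z := hz
    _ = r (z.1, z.2) := by rw [Prod.mk.eta]
    _ ≤ ∑ y, r (y, z.2) :=
        Finset.single_le_sum (f := fun y => r (y, z.2)) (fun y _ => hr0 _) (Finset.mem_univ z.1)
  have hqpos : ∀ z : S × S, 0 < r z → 0 < q z := by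
    intro z hz
    rw [hqdef]
    dsimp only
    split
    · rename_i h
      rcases lt_or_ge Pe 1 with h1 | h1
      · linarith
      · exfalso
        have hPe1' : Pe = 1 := le_antisymm hPe1 h1
        have h2 : (if z.1 = z.2 then r z else 0) ≤ ∑ w : S × S, (if w.1 = w.2 then r w else 0) :=
          Finset.single_le_sum (f := fun w : S × S => if w.1 = w.2 then r w else 0)
            (fun w _ => by split <;> simp [hr0 w]) (Finset.mem_univ z)
        rw [if_pos h, hdiag, hPe1'] at h2
        linarith
    · rename_i h
      have hC2 : 2 ≤ C := by
        rw [← hcard]; exact Fintype.one_lt_card_iff.2 ⟨z.1, z.2, h⟩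
      have hCpos : (0:ℝ) < (C:ℝ) - 1 := by
        have : (2:ℝ) ≤ (C:ℝ) := by exact_mod_cast hC2
        linarith
      have hPepos : 0 < Pe := by
        rw [hPesum]
        have h2 : (if z.1 ≠ z.2 then r z else 0) ≤ ∑ w : S × S, (if w.1 ≠ w.2 then r w else 0) :=
          Finset.single_le_sum (f := fun w : S × S => if w.1 ≠ w.2 then r w else 0)
            (fun w _ => by split <;> simp [hr0 w]) (Finset.mem_univ z)
        rw [if_pos h] at h2
        linarith
      positivity
  -- key pointwise bound
  have hkey : ∀ z : S × S,
      r z * (Real.log (m z.2) + Real.log (q z) - Real.log (r z)) ≤ m z.2 * q z - r z := by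
    intro z
    rcases eq_or_lt_of_le (hr0 z) with h | h
    · rw [← h]
      simpa using mul_nonneg (hm0 z.2) (hq0 z)
    · have hm' := hmpos z h
      have hq' := hqpos z h
      have hlog : Real.log (m z.2) + Real.log (q z) - Real.log (r z)
          = Real.log (m z.2 * q z / r z) := by
        rw [Real.log_div (by positivity) (ne_of_gt h), Real.log_mul (ne_of_gt hm') (ne_of_gt hq')]
      rw [hlog]
      have := Real.log_le_sub_one_of_pos (show 0 < m z.2 * q z / r z by positivity)
      calc r z * Real.log (m z.2 * q z / r z) ≤ r z * (m z.2 * q z / r z - 1) :=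
            mul_le_mul_of_nonneg_left this (le_of_lt h)
        _ = m z.2 * q z - r z := by field_simp
  -- the sum of the RHS of hkey is ≤ 0
  have hsum0 : ∑ z : S × S, (m z.2 * q z - r z) ≤ 0 := by
    rw [Finset.sum_sub_distrib, hrsum]
    have : ∑ z : S × S, m z.2 * q z ≤ 1 := by
      rw [Fintype.sum_prod_type, Finset.sum_comm]
      calc ∑ t, ∑ y, m t * q (y, t) = ∑ t, m t * ∑ y, q (y, t) := by
            refine Finset.sum_congr rfl fun t _ => ?_
            rw [Finset.mul_sum]
        _ ≤ ∑ t, m t * 1 := Finset.sum_le_sum fun t _ =>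
            mul_le_mul_of_nonneg_left (hqsum t) (hm0 t)
        _ = 1 := by
            simp only [mul_one]
            rw [← hrsum, Fintype.sum_prod_type, Finset.sum_comm]
            exact Finset.sum_congr rfl fun t _ => hmr t
    linarith
  -- express condEntropy
  have hce : condEntropy p Y Yhat
      = ∑ z : S × S, r z * (Real.log (m z.2) - Real.log (r z)) := by
    unfold condEntropy entropy
    rw [← hrdef, ← hmdef]
    have h1 : ∑ t, m t * Real.log (m t) = ∑ z : S × S, r z * Real.log (m z.2) := by
      rw [Fintype.sum_prod_type, Finset.sum_comm]
      refine Finset.sum_congr rfl fun t _ => ?_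
      have h3 : ∑ x : S, r (x, t) * Real.log (m (x, t).2)
          = (∑ x : S, r (x, t)) * Real.log (m t) := by
        rw [Finset.sum_mul]
      rw [h3, ← hmr]
    have h2 : ∑ z : S × S, r z * (Real.log (m z.2) - Real.log (r z))
        = ∑ z : S × S, r z * Real.log (m z.2) - ∑ z : S × S, r z * Real.log (r z) := by
      rw [← Finset.sum_sub_distrib]
      exact Finset.sum_congr rfl fun z _ => by ring
    rw [h2, ← h1]
    ring
  -- express RHS
  have hrhs : binEntropy Pe + Pe * Real.log ((C:ℝ) - 1)
      = -∑ z : S × S, r z * Real.log (q z) := by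
    have hsplit : ∑ z : S × S, r z * Real.log (q z)
        = (1 - Pe) * Real.log (1 - Pe) + Pe * Real.log (Pe / ((C:ℝ)-1)) := by
      have : ∀ z : S × S, r z * Real.log (q z)
          = (if z.1 = z.2 then r z else 0) * Real.log (1 - Pe)
            + (if z.1 ≠ z.2 then r z else 0) * Real.log (Pe / ((C:ℝ)-1)) := by
        intro z
        rw [hqdef]
        by_cases h : z.1 = z.2 <;> simp [h]
      rw [Finset.sum_congr rfl fun z _ => this z, Finset.sum_add_distrib,
        ← Finset.sum_mul, ← Finset.sum_mul, hdiag, ← hPesum]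
    rw [hsplit]
    rcases eq_or_lt_of_le hPe0 with h0 | h0
    · -- Pe = 0
      rw [← h0]
      unfold binEntropy
      simp
    · have hC2 : 2 ≤ C := by
        by_contra hcon
        push_neg at hcon
        have hCe : C = 1 := by omega
        have hcard1 : Fintype.card S ≤ 1 := by rw [hcard, hCe]
        have hcon2 := Fintype.card_le_one_iff.mp hcard1
        have : Pe = 0 := by
          rw [hPesum]
          refine Finset.sum_eq_zero fun z _ => ?_
          rw [if_neg]
          simp only [ne_eq, not_not]
          exact hcon2 z.1 z.2
        linarith
      have hne : (C:ℝ) - 1 ≠ 0 := by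
        have : (2:ℝ) ≤ (C:ℝ) := by exact_mod_cast hC2
        linarith
      rw [Real.log_div (ne_of_gt h0) hne]
      unfold binEntropy
      ring
  -- conclude
  rw [hce, hrhs]
  have hstep : ∑ z : S × S, r z * (Real.log (m z.2) - Real.log (r z))
      = ∑ z : S × S, r z * (Real.log (m z.2) + Real.log (q z) - Real.log (r z))
        - ∑ z : S × S, r z * Real.log (q z) := by
    rw [← Finset.sum_sub_distrib]
    refine Finset.sum_congr rfl fun z _ => ?_
    ring
  rw [hstep]
  have : ∑ z : S × S, r z * (Real.log (m z.2) + Real.log (q z) - Real.log (r z)) ≤ 0 :=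
    le_trans (Finset.sum_le_sum fun z _ => hkey z) hsum0
  linarith
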